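/- Let G be a transitive subgroup of Sym(Ω) such that π(G) is a chain under refinement. Then there is a prime p such that G is isomorphic to a subgroup of the Prüfer p-group. -/

import Mathlib

/-- The orbit partition of a permutation `g`, as a setoid on `Ω`. -/
def piPart {Ω : Type*} (g : Equiv.Perm Ω) : Setoid Ω :=
  MulAction.orbitRel (Subgroup.zpowers g) Ω

/-- The set of orbit partitions of elements of a permutation group `G`. -/
def piSet {Ω : Type*} (G : Subgroup (Equiv.Perm Ω)) : Set (Setoid Ω) :=
  {P | ∃ g ∈ G, piPart g = P}

/-- `G` is join-coherent if its set of orbit partitions is closed under joins. -/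
def JoinCoherent {Ω : Type*} (G : Subgroup (Equiv.Perm Ω)) : Prop :=
  ∀ P ∈ piSet G, ∀ Q ∈ piSet G, P ⊔ Q ∈ piSet G

/-- `G` is meet-coherent if its set of orbit partitions is closed under meets. -/
def MeetCoherent {Ω : Type*} (G : Subgroup (Equiv.Perm Ω)) : Prop :=
  ∀ P ∈ piSet G, ∀ Q ∈ piSet G, P ⊓ Q ∈ piSet G

/-- The Prüfer `p`-group: the subgroup of `ℚ/ℤ` generated by the images of `1/p^i`. -/
def pruferGroup (p : ℕ) : AddSubgroup (ℚ ⧸ AddSubgroup.zmultiples (1 : ℚ)) :=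
  AddSubgroup.closure
    (Set.range fun i : ℕ =>
      (QuotientAddGroup.mk (1 / (p : ℚ) ^ i) : ℚ ⧸ AddSubgroup.zmultiples (1 : ℚ)))

open Subgroup Equiv


section Perm
variable {Ω : Type*}

lemma piPart_rel (g : Equiv.Perm Ω) (x y : Ω) : piPart g x y ↔ ∃ n : ℤ, (g ^ n) y = x := by
  rw [piPart, MulAction.orbitRel_apply, MulAction.mem_orbit_iff]
  constructor
  · rintro ⟨⟨u, hu⟩, h⟩
    obtain ⟨n, rfl⟩ := Subgroup.mem_zpowers_iff.mp hu
    refine ⟨n, ?_⟩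
    simpa [Subgroup.smul_def, Equiv.Perm.smul_def] using h
  · rintro ⟨n, h⟩
    exact ⟨⟨g ^ n, zpow_mem (mem_zpowers g) n⟩, by simpa [Subgroup.smul_def, Equiv.Perm.smul_def]⟩

lemma zpow_fix_of_eq {h : Equiv.Perm Ω} {a : Ω} {s t : ℤ} (he : (h ^ s) a = (h ^ t) a) :
    (h ^ (s - t)) a = a := by
  have h1 : h ^ (s - t) = (h ^ t)⁻¹ * h ^ s := by
    rw [← zpow_neg, ← zpow_add]; ring_nf
  rw [h1, Equiv.Perm.mul_apply, he, ← Equiv.Perm.mul_apply, ← zpow_neg, ← zpow_add]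
  simp

lemma zpow_fix {w : Equiv.Perm Ω} {a : Ω} (ha : w a = a) (n : ℤ) : (w ^ n) a = a :=
  Function.IsFixedPt.perm_zpow ha n

variable {G : Subgroup (Equiv.Perm Ω)}

lemma piPart_mem {g : Equiv.Perm Ω} (hg : g ∈ G) : piPart g ∈ piSet G := ⟨g, hg, rfl⟩

lemma piPart_total (hchain : IsChain (· ≤ ·) (piSet G)) {g h : Equiv.Perm Ω}
    (hg : g ∈ G) (hh : h ∈ G) : piPart g ≤ piPart h ∨ piPart h ≤ piPart g := by
  by_cases he : piPart g = piPart h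
  · exact Or.inl (he ▸ le_refl _)
  · exact hchain (piPart_mem hg) (piPart_mem hh) he

/-- Every point has finite period under every element of `G`, when `π(G)` is a chain. -/
lemma exists_pow_fix (hchain : IsChain (· ≤ ·) (piSet G)) {h : Equiv.Perm Ω}
    (hh : h ∈ G) (a : Ω) : ∃ N : ℕ, 0 < N ∧ (h ^ N) a = a := by
  by_contra hc
  push_neg at hc
  have key : ∀ n : ℤ, (h ^ n) a = a → n = 0 := by
    intro n hn
    by_contra h0
    rcases lt_or_gt_of_ne h0 with hlt | hgt
    · have : (h ^ (0 - n)) a = a := zpow_fix_of_eq (by simpa using hn.symm)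
      have h2 : (h ^ (-n).toNat) a = a := by
        rw [← zpow_natCast, show ((-n).toNat : ℤ) = 0 - n by omega]; exact this
      exact hc _ (by omega) h2
    · have h2 : (h ^ n.toNat) a = a := by rwa [← zpow_natCast, show (n.toNat : ℤ) = n by omega]
      exact hc _ (by omega) h2
  have h2G : h ^ 2 ∈ G := pow_mem hh 2
  have h3G : h ^ 3 ∈ G := pow_mem hh 3
  rcases piPart_total hchain h2G h3G with H | H
  · have r2 : piPart (h ^ 2) ((h ^ 2) a) a := (piPart_rel _ _ _).mpr ⟨1, by simp⟩
    obtain ⟨m, hm⟩ := (piPart_rel _ _ _).mp (H r2)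
    have hm' : (h ^ (3 * m)) a = (h ^ (2:ℤ)) a := by
      rw [← zpow_natCast h 3, ← zpow_natCast h 2, ← zpow_mul] at hm
      exact hm
    have := key _ (zpow_fix_of_eq hm')
    omega
  · have r3 : piPart (h ^ 3) ((h ^ 3) a) a := (piPart_rel _ _ _).mpr ⟨1, by simp⟩
    obtain ⟨m, hm⟩ := (piPart_rel _ _ _).mp (H r3)
    have hm' : (h ^ (2 * m)) a = (h ^ (3:ℤ)) a := by
      rw [← zpow_natCast h 2, ← zpow_natCast h 3, ← zpow_mul] at hm
      exact hm
    have := key _ (zpow_fix_of_eq hm')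
    omega

end Perm

section Free
variable {Ω : Type*} {G : Subgroup (Equiv.Perm Ω)}

lemma conj_rel (u v : Equiv.Perm Ω) (x y : Ω) :
    piPart (v * u * v⁻¹) x y ↔ piPart u (v⁻¹ x) (v⁻¹ y) := by
  rw [piPart_rel, piPart_rel]
  constructor
  · rintro ⟨n, hn⟩
    refine ⟨n, ?_⟩
    rw [conj_zpow] at hn
    simp only [Equiv.Perm.mul_apply] at hn
    rw [← hn]
    simp
  · rintro ⟨n, hn⟩
    refine ⟨n, ?_⟩
    rw [conj_zpow]
    simp only [Equiv.Perm.mul_apply]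
    rw [hn]
    simp

lemma conj_mono {u u' : Equiv.Perm Ω} (v : Equiv.Perm Ω) (h : piPart u ≤ piPart u') :
    piPart (v * u * v⁻¹) ≤ piPart (v * u' * v⁻¹) := by
  rw [Setoid.le_def]
  intro x y hxy
  rw [conj_rel] at hxy ⊢
  exact h hxy

/-- Freeness: a member of `G` with a fixed point is the identity. -/
lemma free_of_chain (hchain : IsChain (· ≤ ·) (piSet G))
    (htrans : ∀ a b : Ω, ∃ g ∈ G, g a = b)
    {w : Equiv.Perm Ω} (hw : w ∈ G) {a : Ω} (ha : w a = a) : w = 1 := by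
  by_contra hw1
  obtain ⟨b, hb⟩ : ∃ b, w b ≠ b := by
    by_contra hc
    push_neg at hc
    exact hw1 (Equiv.ext hc)
  obtain ⟨h, hh, hha⟩ := htrans a b
  have hba : b ≠ a := fun hba => hb (by rw [hba, ha, ← hba])
  -- Step 1 : finite period of a under h
  obtain ⟨N, hN0, hNa⟩ := exists_pow_fix hchain hh a
  -- Step 2 : piPart w ≤ piPart h
  have hwh : piPart w ≤ piPart h := by
    rcases piPart_total hchain hw hh with H | H
    · exact H
    · exfalso
      have r1 : piPart h b a := (piPart_rel _ _ _).mpr ⟨1, by simpa using hha⟩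
      obtain ⟨n, hn⟩ := (piPart_rel _ _ _).mp (H r1)
      rw [zpow_fix ha n] at hn
      exact hba hn.symm
  -- commuting facts
  have hNb : (h ^ N) b = b := by
    rw [← hha, ← Equiv.Perm.mul_apply, ← pow_succ, pow_succ', Equiv.Perm.mul_apply, hNa]
  have hNwb : (h ^ N) (w b) = w b := by
    have rwb : piPart w (w b) b := (piPart_rel _ _ _).mpr ⟨1, by simp⟩
    obtain ⟨j, hj⟩ := (piPart_rel _ _ _).mp (hwh rwb)
    have hcomm : (h ^ N : Equiv.Perm Ω) * h ^ j = h ^ j * (h ^ N : Equiv.Perm Ω) := by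
      rw [← zpow_natCast h N, ← zpow_add, ← zpow_add]; ring_nf
    calc (h ^ N) (w b) = (h ^ N) ((h ^ j) b) := by rw [hj]
    _ = ((h ^ N : Equiv.Perm Ω) * h ^ j) b := rfl
    _ = ((h ^ j) * (h ^ N : Equiv.Perm Ω)) b := by rw [hcomm]
    _ = (h ^ j) b := by simp only [Equiv.Perm.mul_apply, hNb]
    _ = w b := hj
  -- the two cases
  have key1 : piPart (h * w * h⁻¹) (w b) b → False := by
    intro hr
    obtain ⟨n, hn⟩ := (piPart_rel _ _ _).mp hr
    rw [conj_zpow] at hn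
    simp only [Equiv.Perm.mul_apply] at hn
    have hinvb : h⁻¹ b = a := by rw [← hha]; simp
    rw [hinvb, zpow_fix ha n, hha] at hn
    exact hb hn.symm
  have hw1G : h * w * h⁻¹ ∈ G := mul_mem (mul_mem hh hw) (inv_mem hh)
  rcases piPart_total hchain hw (G := G) hw1G with H | H
  · -- Case A : piPart w ≤ piPart (h w h⁻¹)
    exact key1 (H ((piPart_rel _ _ _).mpr ⟨1, by simp⟩))
  · -- Case B
    -- Q (i+1) ≤ Q i  where Q i = piPart (h^i * w * h^-i)
    have step : ∀ i : ℕ, piPart (h ^ (i+1) * w * (h ^ (i+1))⁻¹) ≤ piPart (h ^ i * w * (h ^ i)⁻¹) := by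
      intro i
      have := conj_mono (h ^ i) H
      have e1 : h ^ i * (h * w * h⁻¹) * (h ^ i)⁻¹ = h ^ (i+1) * w * (h ^ (i+1))⁻¹ := by
        group
      have e2 : h ^ i * w * (h ^ i)⁻¹ = h ^ i * w * (h ^ i)⁻¹ := rfl
      rwa [e1] at this
    have chain : ∀ i : ℕ, piPart (h ^ (i+1) * w * (h ^ (i+1))⁻¹) ≤ piPart (h * w * h⁻¹) := by
      intro i
      induction i with
      | zero => simpa using le_refl _
      | succ k ih => exact le_trans (step (k+1)) ih
    -- rel at level N
    obtain ⟨N', rfl⟩ : ∃ N', N = N' + 1 := ⟨N - 1, by omega⟩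
    have relN : piPart (h ^ (N'+1) * w * (h ^ (N'+1))⁻¹) (w b) b := by
      refine (piPart_rel _ _ _).mpr ⟨1, ?_⟩
      have hinv : (h ^ (N'+1))⁻¹ b = b := by
        apply Equiv.injective (h ^ (N'+1)); simp [hNb]
      simp only [zpow_one, Equiv.Perm.mul_apply, hinv]
      exact hNwb
    exact key1 (chain N' relN)

end Free

section Facts
variable {Ω : Type*} {G : Subgroup (Equiv.Perm Ω)}

lemma comp_and_tors (hchain : IsChain (· ≤ ·) (piSet G))
    (htrans : ∀ a b : Ω, ∃ g ∈ G, g a = b) :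
    (∀ x y : ↥G, x ∈ Subgroup.zpowers y ∨ y ∈ Subgroup.zpowers x) ∧
      (∀ x : ↥G, IsOfFinOrder x) := by
  rcases isEmpty_or_nonempty Ω with hΩ | hΩ
  · have h1 : ∀ f : Equiv.Perm Ω, f = 1 := fun f => Equiv.ext (fun x => isEmptyElim x)
    constructor
    · intro x y
      left
      refine Subgroup.mem_zpowers_iff.mpr ⟨0, ?_⟩
      ext1
      simp only [zpow_zero, OneMemClass.coe_one]
      exact (h1 _).symm
    · intro x
      refine isOfFinOrder_iff_pow_eq_one.mpr ⟨1, one_pos, ?_⟩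
      ext1
      rw [h1 ((x:↥G)^1 : ↥G).1, h1 ((1 : ↥G) : Equiv.Perm Ω)]
  · obtain ⟨a⟩ := hΩ
    constructor
    · intro x y
      have key : ∀ u v : ↥G, piPart (u : Equiv.Perm Ω) ≤ piPart (v : Equiv.Perm Ω) →
          u ∈ Subgroup.zpowers v := by
        intro u v H
        have r1 : piPart (u : Equiv.Perm Ω) ((u : Equiv.Perm Ω) a) a :=
          (piPart_rel _ _ _).mpr ⟨1, by simp⟩
        obtain ⟨n, hn⟩ := (piPart_rel _ _ _).mp (H r1)
        have hz : (((v : Equiv.Perm Ω) ^ (-n) * u) : Equiv.Perm Ω) a = a := by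
          rw [Equiv.Perm.mul_apply, ← hn, ← Equiv.Perm.mul_apply, ← zpow_add]
          simp
        have hzG : ((v : Equiv.Perm Ω) ^ (-n) * u) ∈ G :=
          mul_mem (zpow_mem v.2 _) u.2
        have := free_of_chain hchain htrans hzG hz
        have hu : (u : Equiv.Perm Ω) = (v : Equiv.Perm Ω) ^ n := by
          have h2 := congrArg (fun f => (v : Equiv.Perm Ω) ^ n * f) this
          simpa [← mul_assoc, ← zpow_add] using h2
        exact Subgroup.mem_zpowers_iff.mpr ⟨n, by ext1; simp [hu]⟩
      rcases piPart_total hchain x.2 y.2 with H | H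
      · exact Or.inl (key x y H)
      · exact Or.inr (key y x H)
    · intro x
      obtain ⟨N, hN0, hNa⟩ := exists_pow_fix hchain x.2 a
      refine isOfFinOrder_iff_pow_eq_one.mpr ⟨N, hN0, ?_⟩
      have : (x : Equiv.Perm Ω) ^ N = 1 :=
        free_of_chain hchain htrans (pow_mem x.2 N) hNa
      ext1
      simpa using this

end Facts


section Abs
variable {H : Type*} [Group H]

/-- flip membership of zpowers when orders agree -/
lemma zpowers_flip {a b : H} (hab : a ∈ zpowers b) (hord : orderOf a = orderOf b)
    (h0 : orderOf b ≠ 0) : b ∈ zpowers a := by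
  obtain ⟨k, hk⟩ := mem_zpowers_iff.mp hab
  set o := orderOf b with ho
  set d : ℕ := Int.gcd k o with hd
  have hdo : d ∣ o := by
    have := Int.gcd_dvd_right (a := k) (b := (o : ℤ))
    exact_mod_cast this
  have hbd : b ^ (d : ℤ) ∈ zpowers a := by
    have hbez : (d : ℤ) = k * Int.gcdA k o + o * Int.gcdB k o := Int.gcd_eq_gcd_ab k o
    have : b ^ (d : ℤ) = (b ^ k) ^ Int.gcdA k o * (b ^ (o : ℤ)) ^ Int.gcdB k o := by
      rw [← zpow_mul, ← zpow_mul, ← zpow_add, ← hbez]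
    rw [this, hk]
    have hbo : b ^ (o : ℤ) = 1 := by
      rw [zpow_natCast, ho, pow_orderOf_eq_one]
    rw [hbo, one_zpow, mul_one]
    exact zpow_mem (mem_zpowers a) _
  -- orderOf a divides orderOf (b ^ d)
  have hdk : (d : ℤ) ∣ k := Int.gcd_dvd_left k (o : ℤ)
  obtain ⟨m, hm⟩ := hdk
  have ham : a ∈ zpowers (b ^ (d : ℤ)) := by
    refine mem_zpowers_iff.mpr ⟨m, ?_⟩
    rw [← zpow_mul, ← hm, hk]
  have h1 : o ∣ orderOf (b ^ (d : ℤ)) := by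
    rw [← hord]
    exact orderOf_dvd_of_mem_zpowers ham
  have h2 : orderOf (b ^ (d : ℤ)) ∣ o / d := by
    apply orderOf_dvd_of_pow_eq_one
    rw [zpow_natCast, ← pow_mul, Nat.mul_div_cancel' hdo, ho, pow_orderOf_eq_one]
  have hd1 : d = 1 := by
    have hdpos : 0 < d := by
      rcases Nat.eq_zero_or_pos d with h | h
      · exact absurd (Nat.eq_zero_of_zero_dvd (h ▸ hdo)) h0
      · exact h
    have hodd : o ∣ o / d := dvd_trans h1 h2
    have hlow : o / d ≤ o := Nat.div_le_self o d
    have hpos : 0 < o := Nat.pos_of_ne_zero h0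
    have hdiv : 0 < o / d := Nat.div_pos (Nat.le_of_dvd hpos hdo) hdpos
    have := Nat.le_of_dvd hdiv hodd
    have heq : o / d = o := le_antisymm hlow (by omega)
    have := Nat.div_mul_cancel hdo
    nlinarith [heq, this]
  rw [hd1] at hbd
  simpa using hbd

lemma orderOf_pow_p {p : ℕ} (hp : p.Prime) {x : H} {e j : ℕ} (hx : orderOf x = p ^ e)
    (hj : j ≤ e) : orderOf (x ^ (p ^ j)) = p ^ (e - j) := by
  rw [orderOf_pow' x (pow_ne_zero j hp.pos.ne'), hx,
    Nat.gcd_eq_right (pow_dvd_pow p hj), Nat.pow_div hj hp.pos]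

lemma eq_pow_of_unique_prime {p : ℕ} :
    ∀ n : ℕ, n ≠ 0 → (∀ q : ℕ, q.Prime → q ∣ n → q = p) → ∃ e, n = p ^ e := by
  intro n
  induction n using Nat.strong_induction_on with
  | _ n ih =>
    intro hn hq
    rcases eq_or_ne n 1 with rfl | hn1
    · exact ⟨0, rfl⟩
    · obtain ⟨q, hqp, hqd⟩ := Nat.exists_prime_and_dvd hn1
      have hqp' := hq q hqp hqd
      subst hqp'
      obtain ⟨m, rfl⟩ := hqd
      have hm0 : m ≠ 0 := by rintro rfl; simp at hn
      have hmlt : m < q * m := by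
        nlinarith [hqp.two_le, Nat.pos_of_ne_zero hm0]
      obtain ⟨e, rfl⟩ := ih m hmlt hm0 (fun r hr hrd => hq r hr (Dvd.dvd.mul_left hrd q))
      exact ⟨e + 1, by ring⟩

end Abs

section Interface
variable {H : Type*} [Group H] {p : ℕ}

/-- covering lemma: if `t` has the same order as `x`, and cyclic subgroups are
comparable, then `x` is a power of `t`. -/
lemma cover_aux (hp : p.Prime)
    (hcomp : ∀ x y : H, x ∈ zpowers y ∨ y ∈ zpowers x)
    {t x : H} (ht : orderOf t = orderOf x) (h0 : orderOf t ≠ 0) :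
    ∃ k : ℤ, x = t ^ k := by
  rcases hcomp x t with h | h
  · obtain ⟨k, hk⟩ := mem_zpowers_iff.mp h
    exact ⟨k, hk.symm⟩
  · have := zpowers_flip h ht (ht ▸ h0)
    obtain ⟨k, hk⟩ := mem_zpowers_iff.mp this
    exact ⟨k, hk.symm⟩

lemma exists_interface (hp : p.Prime)
    (hcomp : ∀ x y : H, x ∈ zpowers y ∨ y ∈ zpowers x)
    (hordp : ∀ x : H, ∃ e : ℕ, orderOf x = p ^ e) :
    ∃ (g : ℕ → H) (c : ℕ → ℕ), Monotone c ∧ (∀ n, orderOf (g n) = p ^ c n) ∧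
      (∀ n m, n ≤ m → g n = g m ^ (p ^ (c m - c n))) ∧
      (∀ x : H, ∃ (n : ℕ) (k : ℤ), x = g n ^ k) := by
  have hp1 : 1 < p := hp.one_lt
  have cover : ∀ (t x : H), orderOf t = orderOf x → ∃ k : ℤ, x = t ^ k := by
    intro t x ht
    apply cover_aux hp hcomp ht
    rw [ht]
    obtain ⟨e, he⟩ := hordp x
    rw [he]
    exact (pow_pos hp.pos e).ne'
  by_cases hbdd : ∃ M, ∀ x : H, orderOf x ∣ p ^ M
  · -- bounded case
    classical
    set M₀ := Nat.find hbdd with hM₀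
    have hMspec : ∀ x : H, orderOf x ∣ p ^ M₀ := Nat.find_spec hbdd
    have hattain : ∃ t : H, orderOf t = p ^ M₀ := by
      rcases Nat.eq_zero_or_pos M₀ with h0 | h0
      · exact ⟨1, by rw [h0, orderOf_one, pow_zero]⟩
      · have := Nat.find_min hbdd (m := M₀ - 1) (by omega)
        push_neg at this
        obtain ⟨x, hx⟩ := this
        obtain ⟨e, he⟩ := hordp x
        have h1 : e ≤ M₀ := by
          have := hMspec x
          rw [he] at this
          exact (Nat.pow_dvd_pow_iff_le_right hp1).mp this
        have h2 : ¬ e ≤ M₀ - 1 := by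
          intro h
          exact hx (by rw [he]; exact pow_dvd_pow p h)
        have : e = M₀ := by omega
        exact ⟨x, by rw [he, this]⟩
    obtain ⟨t, ht⟩ := hattain
    refine ⟨fun n => t ^ (p ^ (M₀ - min n M₀)), fun n => min n M₀, ?_, ?_, ?_, ?_⟩
    · intro i j hij
      simp only
      omega
    · intro n
      show orderOf (t ^ p ^ (M₀ - min n M₀)) = p ^ (min n M₀)
      rw [orderOf_pow_p hp ht (by omega), show M₀ - (M₀ - min n M₀) = min n M₀ by omega]
    · intro n m hnm
      show t ^ p ^ (M₀ - min n M₀) = (t ^ p ^ (M₀ - min m M₀)) ^ p ^ (min m M₀ - min n M₀)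
      rw [← pow_mul, ← pow_add,
        show M₀ - min m M₀ + (min m M₀ - min n M₀) = M₀ - min n M₀ by omega]
    · intro x
      obtain ⟨e, he⟩ := hordp x
      have heM : e ≤ M₀ := by
        have := hMspec x
        rw [he] at this
        exact (Nat.pow_dvd_pow_iff_le_right hp1).mp this
      have hord : orderOf (t ^ (p ^ (M₀ - min e M₀))) = orderOf x := by
        rw [orderOf_pow_p hp ht (by omega), he]
        congr 1
        omega
      obtain ⟨k, hk⟩ := cover _ x hord
      exact ⟨e, k, hk⟩
  · -- unbounded case
    push_neg at hbdd
    have getz : ∀ n : ℕ, ∃ z : H, orderOf z = p ^ (n + 1) := by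
      intro n
      obtain ⟨x, hx⟩ := hbdd n
      obtain ⟨e, he⟩ := hordp x
      have hegt : n + 1 ≤ e := by
        by_contra hc
        exact hx (by rw [he]; exact pow_dvd_pow p (by omega))
      refine ⟨x ^ (p ^ (e - (n+1))), ?_⟩
      rw [orderOf_pow_p hp he (by omega)]
      congr 1
      omega
    have step : ∀ (n : ℕ) (x : H), orderOf x = p ^ n →
        ∃ y : H, y ^ p = x ∧ orderOf y = p ^ (n + 1) := by
      intro n x hx
      obtain ⟨z, hz⟩ := getz n
      have hxz : x ∈ zpowers z := by
        rcases hcomp x z with h | h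
        · exact h
        · exfalso
          have := orderOf_dvd_of_mem_zpowers h
          rw [hz, hx] at this
          exact absurd ((Nat.pow_dvd_pow_iff_le_right hp1).mp this) (by omega)
      obtain ⟨m, hm⟩ := mem_zpowers_iff.mp hxz
      have hdvd : ((p : ℤ)) ^ (n + 1) ∣ m * (p : ℤ) ^ n := by
        have h1 : z ^ (m * (p : ℤ) ^ n) = 1 := by
          rw [zpow_mul, hm]
          rw [show ((p : ℤ) ^ n) = ((p ^ n : ℕ) : ℤ) by push_cast; ring, zpow_natCast, ← hx,
            pow_orderOf_eq_one]
        have := orderOf_dvd_iff_zpow_eq_one.mpr h1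
        rwa [hz, Nat.cast_pow] at this
      have hpm : (p : ℤ) ∣ m := by
        have h2 : (p : ℤ) ^ n * (p : ℤ) ∣ (p : ℤ) ^ n * m := by
          rw [← pow_succ]
          exact Dvd.dvd.trans hdvd (by rw [mul_comm])
        exact (mul_dvd_mul_iff_left (a := (p:ℤ)^n) (pow_ne_zero n (by exact_mod_cast hp.pos.ne'))).mp h2
      obtain ⟨m', hm'⟩ := hpm
      rcases Nat.eq_zero_or_pos n with rfl | hn
      · refine ⟨z, ?_, by rw [hz]⟩
        have hx1 : x = 1 := orderOf_eq_one_iff.mp (by rw [hx, pow_zero])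
        rw [zero_add, pow_one] at hz
        rw [hx1, ← hz, pow_orderOf_eq_one]
      · refine ⟨z ^ m', ?_, ?_⟩
        · rw [← zpow_natCast (z ^ m') p, ← zpow_mul, mul_comm, ← hm', hm]
        · have hy1 : (z ^ m') ^ (p ^ (n + 1)) = 1 := by
            have : (z ^ m') ^ (p ^ (n+1) : ℕ) = (z ^ ((p:ℤ) * m')) ^ (p ^ n : ℕ) := by
              rw [← zpow_natCast, ← zpow_natCast, ← zpow_mul, ← zpow_mul]
              congr 1
              push_cast
              ring
            rw [this, ← hm', hm, ← hx, pow_orderOf_eq_one]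
          have hy2 : ¬ (z ^ m') ^ (p ^ n) = 1 := by
            intro hc
            have : x ^ (p ^ (n - 1)) = 1 := by
              have e1 : x ^ (p ^ (n-1) : ℕ) = (z ^ m') ^ (p ^ n : ℕ) := by
                rw [← hm, hm']
                rw [← zpow_natCast, ← zpow_natCast, ← zpow_mul, ← zpow_mul]
                congr 1
                push_cast
                rw [show n = (n-1) + 1 by omega]
                push_cast
                ring_nf
              rw [e1, hc]
            have := orderOf_dvd_of_pow_eq_one this
            rw [hx] at this
            exact absurd ((Nat.pow_dvd_pow_iff_le_right hp1).mp this) (by omega)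
          have hdvd2 := orderOf_dvd_of_pow_eq_one hy1
          obtain ⟨i, hi, hieq⟩ := (Nat.dvd_prime_pow hp).mp hdvd2
          have : i = n + 1 := by
            by_contra hc
            exact hy2 (by
              calc (z ^ m') ^ p ^ n = ((z ^ m') ^ p ^ i) ^ p ^ (n - i) := by
                    rw [← pow_mul, ← pow_add, show i + (n - i) = n by omega]
              _ = 1 := by rw [← hieq, pow_orderOf_eq_one, one_pow])
          rw [hieq, this]
    -- tower construction
    let seq : ∀ n : ℕ, {x : H // orderOf x = p ^ n} := fun n =>
      Nat.rec ⟨1, by simp⟩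
        (fun k prev => ⟨(step k prev.1 prev.2).choose, (step k prev.1 prev.2).choose_spec.2⟩) n
    have hcompat : ∀ n : ℕ, (seq (n+1)).1 ^ p = (seq n).1 := fun n =>
      (step n (seq n).1 (seq n).2).choose_spec.1
    have hrel : ∀ n m : ℕ, n ≤ m → (seq n).1 = (seq m).1 ^ (p ^ (m - n)) := by
      intro n m hnm
      induction m, hnm using Nat.le_induction with
      | base => simp
      | succ m hm ih =>
        rw [ih, ← hcompat m, ← pow_mul,
          show p * p ^ (m - n) = p ^ (m + 1 - n) by
            rw [← pow_succ']; congr 1; omega]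
    refine ⟨fun n => (seq n).1, id, monotone_id, fun n => (seq n).2, ?_, ?_⟩
    · intro n m hnm
      show (seq n).1 = (seq m).1 ^ (p ^ (m - n))
      exact hrel n m hnm
    · intro x
      obtain ⟨e, he⟩ := hordp x
      have hord : orderOf (seq e).1 = orderOf x := by rw [(seq e).2, he]
      obtain ⟨k, hk⟩ := cover _ x hord
      exact ⟨e, k, hk⟩

end Interface

section Phi
variable {H : Type*} [Group H] {p : ℕ}

lemma frac_lift {q : ℚ} (hq : q ≠ 0) {a b : ℕ} (hab : a ≤ b) (k : ℚ) :
    k / q ^ a = (q ^ (b - a) * k) / q ^ b := by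
  rw [div_eq_div_iff (pow_ne_zero _ hq) (pow_ne_zero _ hq), mul_comm (q ^ (b-a)) k,
    mul_assoc, ← pow_add, show b - a + a = b by omega]

lemma rep_eq (hp : p.Prime) (g : ℕ → H) (c : ℕ → ℕ) (hmono : Monotone c)
    (hord : ∀ n, orderOf (g n) = p ^ c n)
    (hrel : ∀ n m, n ≤ m → g n = g m ^ (p ^ (c m - c n)))
    {n m : ℕ} {k l : ℤ} (h : g n ^ k = g m ^ l) :
    (QuotientAddGroup.mk ((k : ℚ) / (p:ℚ) ^ (c n)) : ℚ ⧸ AddSubgroup.zmultiples (1 : ℚ)) =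
      QuotientAddGroup.mk ((l : ℚ) / (p:ℚ) ^ (c m)) := by
  have hpQ : (p : ℚ) ≠ 0 := by exact_mod_cast hp.pos.ne'
  set N := max n m with hN
  have hn : n ≤ N := le_max_left _ _
  have hm : m ≤ N := le_max_right _ _
  have key : ∀ (a : ℕ) (b : ℤ), (g N ^ (p ^ a : ℕ)) ^ b = g N ^ ((p : ℤ) ^ a * b) := by
    intro a b
    rw [← zpow_natCast (g N) (p ^ a), ← zpow_mul]
    norm_cast
  have h2 : g N ^ ((p:ℤ) ^ (c N - c n) * k) = g N ^ ((p:ℤ) ^ (c N - c m) * l) := by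
    rw [← key, ← key, ← hrel n N hn, ← hrel m N hm]
    exact h
  have h3 : g N ^ ((p:ℤ) ^ (c N - c n) * k - (p:ℤ) ^ (c N - c m) * l) = 1 := by
    rw [zpow_sub, h2]
    simp
  have h4 : ((p:ℤ) ^ (c N)) ∣ ((p:ℤ) ^ (c N - c n) * k - (p:ℤ) ^ (c N - c m) * l) := by
    have := orderOf_dvd_iff_zpow_eq_one.mpr h3
    rwa [hord N, Nat.cast_pow] at this
  obtain ⟨d, hd⟩ := h4
  have hQ : (p:ℚ) ^ (c N - c n) * (k:ℚ) - (p:ℚ) ^ (c N - c m) * (l:ℚ) = (p:ℚ) ^ (c N) * d := by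
    exact_mod_cast congrArg (fun z : ℤ => (z : ℚ)) hd
  rw [QuotientAddGroup.eq_iff_sub_mem]
  refine ⟨d, ?_⟩
  have hfin : (k:ℚ) / (p:ℚ) ^ (c n) - (l:ℚ) / (p:ℚ) ^ (c m) = d := by
    rw [frac_lift hpQ (hmono hn) (k:ℚ), frac_lift hpQ (hmono hm) (l:ℚ), div_sub_div_same, hQ,
      mul_comm, mul_div_assoc, div_self (pow_ne_zero _ hpQ), mul_one]
  simpa using hfin.symm

lemma abstract_main {H : Type*} [Group H] {p : ℕ} (hp : p.Prime)
    (hcomp : ∀ x y : H, x ∈ zpowers y ∨ y ∈ zpowers x)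
    (hordp : ∀ x : H, ∃ e : ℕ, orderOf x = p ^ e) :
    ∃ P : AddSubgroup ↥(pruferGroup p), Nonempty (H ≃* Multiplicative ↥P) := by
  classical
  obtain ⟨g, c, hmono, hord, hrel, hcov⟩ := exists_interface hp hcomp hordp
  have hpQ : (p : ℚ) ≠ 0 := by exact_mod_cast hp.pos.ne'
  choose n k hx using hcov
  set Φ : H → ℚ ⧸ AddSubgroup.zmultiples (1:ℚ) :=
    fun x => QuotientAddGroup.mk ((k x : ℚ) / (p:ℚ) ^ (c (n x))) with hΦ
  have hval : ∀ (x : H) (n' : ℕ) (k' : ℤ), x = g n' ^ k' →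
      Φ x = QuotientAddGroup.mk ((k' : ℚ) / (p:ℚ) ^ (c n')) := by
    intro x n' k' h
    exact rep_eq hp g c hmono hord hrel ((hx x).symm.trans h)
  have hone : Φ 1 = 0 := by
    have h0 := hval 1 0 0 (by simp)
    rw [h0]
    simp
  have hmul : ∀ x y : H, Φ (x * y) = Φ x + Φ y := by
    intro x y
    set N := max (n x) (n y) with hN
    have key : ∀ (z : H), n z ≤ N → z = g N ^ ((p:ℤ) ^ (c N - c (n z)) * k z) := by
      intro z hz
      conv_lhs => rw [hx z, hrel (n z) N hz]
      rw [← zpow_natCast (g N) (p ^ (c N - c (n z))), ← zpow_mul]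
      norm_cast
    have h3 : x * y = g N ^ ((p:ℤ) ^ (c N - c (n x)) * k x + (p:ℤ) ^ (c N - c (n y)) * k y) := by
      rw [zpow_add, ← key x (le_max_left _ _), ← key y (le_max_right _ _)]
    rw [hval _ _ _ h3, hΦ]
    simp only
    rw [frac_lift hpQ (hmono (le_max_left (n x) (n y))) ((k x : ℚ)),
      frac_lift hpQ (hmono (le_max_right (n x) (n y))) ((k y : ℚ)),
      ← QuotientAddGroup.mk_add, ← add_div]
    congr 1
    push_cast
    ring
  have hinj : ∀ x : H, Φ x = 0 → x = 1 := by
    intro x h0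
    have hmem : (k x : ℚ) / (p:ℚ) ^ (c (n x)) ∈ AddSubgroup.zmultiples (1:ℚ) := by
      rwa [hΦ, QuotientAddGroup.eq_zero_iff] at h0
    obtain ⟨d, hd⟩ := hmem
    simp only [zsmul_eq_mul, mul_one] at hd
    have hk : k x = d * (p:ℤ) ^ (c (n x)) := by
      have h5 : (k x : ℚ) = d * (p:ℚ) ^ (c (n x)) := by
        rw [hd, div_mul_cancel₀ _ (pow_ne_zero _ hpQ)]
      exact_mod_cast h5
    rw [hx x, hk, mul_comm, zpow_mul]
    have : g (n x) ^ ((p:ℤ) ^ (c (n x))) = 1 := by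
      rw [show ((p:ℤ) ^ (c (n x))) = ((p ^ (c (n x)) : ℕ) : ℤ) by push_cast; ring,
        zpow_natCast, ← hord (n x), pow_orderOf_eq_one]
    rw [this, one_zpow]
  have hrange : ∀ x : H, Φ x ∈ pruferGroup p := by
    intro x
    have : Φ x = (k x) • (QuotientAddGroup.mk ((1:ℚ) / (p:ℚ) ^ (c (n x)))) := by
      rw [hΦ]
      simp only
      rw [← QuotientAddGroup.mk_zsmul]
      congr 1
      rw [zsmul_eq_mul]
      push_cast
      ring
    rw [this]
    exact AddSubgroup.zsmul_mem _
      (AddSubgroup.subset_closure (Set.mem_range_self (c (n x)))) _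
  -- assemble
  let Θ : Additive H →+ ↥(pruferGroup p) :=
    { toFun := fun a => ⟨Φ (Additive.toMul a), hrange _⟩
      map_zero' := Subtype.ext hone
      map_add' := fun a b => Subtype.ext (hmul _ _) }
  have hTinj : Function.Injective Θ := by
    rw [injective_iff_map_eq_zero]
    intro a ha
    have h1 : Φ (Additive.toMul a) = 0 := congrArg Subtype.val ha
    have h2 := hinj _ h1
    exact h2
  refine ⟨Θ.range, ⟨?_⟩⟩
  let e1 := AddMonoidHom.ofInjective hTinj
  let e3 : H ≃* Multiplicative (Additive H) :=
    { toFun := fun h => Multiplicative.ofAdd (Additive.ofMul h)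
      invFun := fun h => Additive.toMul (Multiplicative.toAdd h)
      left_inv := fun _ => rfl
      right_inv := fun _ => rfl
      map_mul' := fun _ _ => rfl }
  exact e3.trans (AddEquiv.toMultiplicative e1)

end Phi


lemma eq_pow_of_unique_prime' {p : ℕ} :
    ∀ n : ℕ, n ≠ 0 → (∀ q : ℕ, q.Prime → q ∣ n → q = p) → ∃ e, n = p ^ e := by
  intro n
  induction n using Nat.strong_induction_on with
  | _ n ih =>
    intro hn hq
    rcases eq_or_ne n 1 with rfl | hn1
    · exact ⟨0, rfl⟩
    · obtain ⟨q, hqp, hqd⟩ := Nat.exists_prime_and_dvd hn1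
      have hqp' := hq q hqp hqd
      subst hqp'
      obtain ⟨m, rfl⟩ := hqd
      have hm0 : m ≠ 0 := by rintro rfl; simp at hn
      have hmlt : m < q * m := by
        nlinarith [hqp.two_le, Nat.pos_of_ne_zero hm0]
      obtain ⟨e, rfl⟩ := ih m hmlt hm0 (fun r hr hrd => hq r hr (Dvd.dvd.mul_left hrd q))
      exact ⟨e + 1, by ring⟩

lemma exists_prime_orders {H : Type*} [Group H]
    (hcomp : ∀ x y : H, x ∈ zpowers y ∨ y ∈ zpowers x)
    (htors : ∀ x : H, IsOfFinOrder x) :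
    ∃ p : ℕ, p.Prime ∧ ∀ x : H, ∃ e : ℕ, orderOf x = p ^ e := by
  have mkord : ∀ (y : H) (q : ℕ), q.Prime → q ∣ orderOf y →
      orderOf (y ^ (orderOf y / q)) = q := by
    intro y q hq hqd
    haveI : Fact q.Prime := ⟨hq⟩
    have hpos : 0 < orderOf y := (htors y).orderOf_pos
    apply orderOf_eq_prime
    · rw [← pow_mul, Nat.div_mul_cancel hqd, pow_orderOf_eq_one]
    · intro hc
      have h1 := orderOf_dvd_of_pow_eq_one hc
      have h2 : 0 < orderOf y / q := Nat.div_pos (Nat.le_of_dvd hpos hqd) hq.pos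
      have h3 := Nat.le_of_dvd h2 h1
      have h4 : orderOf y / q < orderOf y := Nat.div_lt_self hpos hq.one_lt
      omega
  by_cases htriv : ∀ x : H, x = 1
  · exact ⟨2, Nat.prime_two, fun x => ⟨0, by rw [htriv x, orderOf_one, pow_zero]⟩⟩
  · push_neg at htriv
    obtain ⟨x₀, hx₀⟩ := htriv
    have h1 : orderOf x₀ ≠ 1 := fun h => hx₀ (orderOf_eq_one_iff.mp h)
    obtain ⟨p, hp, hpd⟩ := Nat.exists_prime_and_dvd h1
    refine ⟨p, hp, fun x => ?_⟩
    apply eq_pow_of_unique_prime' (orderOf x) (htors x).orderOf_pos.ne'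
    intro q hq hqd
    have hu := mkord x q hq hqd
    have hv := mkord x₀ p hp hpd
    rcases hcomp (x ^ (orderOf x / q)) (x₀ ^ (orderOf x₀ / p)) with h | h
    · have := orderOf_dvd_of_mem_zpowers h
      rw [hu, hv] at this
      exact (Nat.prime_dvd_prime_iff_eq hq hp).mp this
    · have := orderOf_dvd_of_mem_zpowers h
      rw [hu, hv] at this
      exact ((Nat.prime_dvd_prime_iff_eq hp hq).mp this).symm


/-- If `G` is a transitive permutation group whose set of orbit partitions is a chain
under refinement, then `G` is isomorphic to a subgroup of a Prüfer `p`-group. -/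
theorem transitive_chain_subgroup_prufer {Ω : Type*}
    (G : Subgroup (Equiv.Perm Ω))
    (htrans : ∀ a b : Ω, ∃ g ∈ G, g a = b)
    (hchain : IsChain (· ≤ ·) (piSet G)) :
    ∃ p : ℕ, p.Prime ∧ ∃ P : AddSubgroup ↥(pruferGroup p),
      Nonempty (↥G ≃* Multiplicative ↥P) := by
  obtain ⟨hcomp, htors⟩ := comp_and_tors hchain htrans
  obtain ⟨p, hp, hordp⟩ := exists_prime_orders hcomp htors
  exact ⟨p, hp, abstract_main hp hcomp hordp⟩
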